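/- Let M ⊆ ℚ be a nonempty bounded set and let f : M → ℝ be uniformly continuous. Then there exist real numbers y and y' close to M such that f(y) ≤ f(a) ≤ f(y') for every a ∈ M, where f(y) and f(y') denote the extended values of f at y and y'. -/

import Mathlib

open Filter Topology

/-- Uniform continuity of f : M → ℝ for M ⊆ ℚ. -/
def UC (M : Set ℚ) (f : ℚ → ℝ) : Prop :=
  ∀ ε : ℝ, 0 < ε → ∃ δ : ℝ, 0 < δ ∧
    ∀ a ∈ M, ∀ b ∈ M, |(a : ℝ) - (b : ℝ)| ≤ δ → |f a - f b| ≤ ε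

/-- A real number x is close to M ⊆ ℚ: x lies in the closure of M in ℝ. -/
def CloseTo (M : Set ℚ) (x : ℝ) : Prop :=
  ∀ ε : ℝ, 0 < ε → ∃ a ∈ M, |x - (a : ℝ)| ≤ ε

/-- y is the extended value of f at x: every sequence in M converging to x has
f-images converging to y. -/
def ExtVal (M : Set ℚ) (f : ℚ → ℝ) (x y : ℝ) : Prop :=
  ∀ a : ℕ → ℚ, (∀ n, a n ∈ M) →
    Tendsto (fun n => ((a n : ℝ))) atTop (𝓝 x) →
    Tendsto (fun n => f (a n)) atTop (𝓝 y)

lemma key_lemma (M : Set ℚ) (f : ℚ → ℝ) (hf : UC M f)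
    (a : ℕ → ℚ) (ha : ∀ n, a n ∈ M) (x : ℝ)
    (hx : Tendsto (fun n => ((a n : ℝ))) atTop (𝓝 x)) :
    ∃ L, ExtVal M f x L ∧ Tendsto (fun n => f (a n)) atTop (𝓝 L) := by
  have hcauchy : CauchySeq (fun n => f (a n)) := by
    rw [Metric.cauchySeq_iff]
    intro ε hε
    obtain ⟨δ, hδ, hδ'⟩ := hf (ε / 2) (by linarith)
    have hca : CauchySeq (fun n => ((a n : ℝ))) := hx.cauchySeq
    rw [Metric.cauchySeq_iff] at hca
    obtain ⟨N, hN⟩ := hca δ hδ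
    refine ⟨N, fun m hm n hn => ?_⟩
    have h1 := hN m hm n hn
    rw [Real.dist_eq] at h1
    have h2 := hδ' (a m) (ha m) (a n) (ha n) (le_of_lt h1)
    rw [Real.dist_eq]
    linarith
  obtain ⟨L, hL⟩ := cauchySeq_tendsto_of_complete hcauchy
  refine ⟨L, ?_, hL⟩
  intro b hb hbx
  have hdiff : Tendsto (fun n => f (b n) - f (a n)) atTop (𝓝 0) := by
    rw [Metric.tendsto_atTop]
    intro ε hε
    obtain ⟨δ, hδ, hδ'⟩ := hf (ε / 2) (by linarith)
    have hba : Tendsto (fun n => ((b n : ℝ)) - ((a n : ℝ))) atTop (𝓝 0) := by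
      simpa using hbx.sub hx
    rw [Metric.tendsto_atTop] at hba
    obtain ⟨N, hN⟩ := hba δ hδ
    refine ⟨N, fun n hn => ?_⟩
    have h1 := hN n hn
    rw [Real.dist_eq, sub_zero] at h1
    have h2 := hδ' (b n) (hb n) (a n) (ha n) (le_of_lt h1)
    rw [Real.dist_eq, sub_zero]
    linarith
  have h := hdiff.add hL
  simpa using h

lemma bw_lemma (M : Set ℚ) (hbd : ∃ C : ℝ, ∀ a ∈ M, |(a : ℝ)| ≤ C)
    (a : ℕ → ℚ) (ha : ∀ n, a n ∈ M) :
    ∃ x : ℝ, ∃ φ : ℕ → ℕ, StrictMono φ ∧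
      Tendsto (fun k => ((a (φ k) : ℝ))) atTop (𝓝 x) := by
  obtain ⟨C, hC⟩ := hbd
  have hmem : ∀ n, ((a n : ℝ)) ∈ Metric.closedBall (0 : ℝ) C := by
    intro n
    rw [Metric.mem_closedBall, Real.dist_eq, sub_zero]
    exact hC _ (ha n)
  obtain ⟨x, -, φ, hφ, hx⟩ :=
    tendsto_subseq_of_bounded Metric.isBounded_closedBall hmem
  exact ⟨x, φ, hφ, hx⟩

lemma bdd_below_image (M : Set ℚ) (hbd : ∃ C : ℝ, ∀ a ∈ M, |(a : ℝ)| ≤ C)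
    (f : ℚ → ℝ) (hf : UC M f) : BddBelow (f '' M) := by
  by_contra h
  rw [not_bddBelow_iff] at h
  have hseq : ∀ n : ℕ, ∃ q, q ∈ M ∧ f q < -(n : ℝ) := by
    intro n
    obtain ⟨z, hz, hz'⟩ := h (-(n : ℝ))
    obtain ⟨q, hq, rfl⟩ := hz
    exact ⟨q, hq, hz'⟩
  choose a ha hfa using hseq
  obtain ⟨x, φ, hφ, hx⟩ := bw_lemma M hbd a ha
  obtain ⟨L, -, htend⟩ := key_lemma M f hf (fun k => a (φ k)) (fun k => ha (φ k)) x hx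
  rw [Metric.tendsto_atTop] at htend
  obtain ⟨N, hN⟩ := htend 1 one_pos
  obtain ⟨n₀, hn₀⟩ := exists_nat_ge (1 - L)
  set k := max N n₀ with hk
  have h1 := hN k (le_max_left _ _)
  rw [Real.dist_eq] at h1
  have h2 := hfa (φ k)
  have h3 : (k : ℝ) ≤ (φ k : ℝ) := by exact_mod_cast hφ.le_apply
  have h4 : (n₀ : ℝ) ≤ (k : ℝ) := by exact_mod_cast le_max_right N n₀
  have := abs_lt.mp h1
  linarith [this.1]

lemma min_lemma (M : Set ℚ) (hM : M.Nonempty)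
    (hbd : ∃ C : ℝ, ∀ a ∈ M, |(a : ℝ)| ≤ C)
    (f : ℚ → ℝ) (hf : UC M f) :
    ∃ y fy : ℝ, CloseTo M y ∧ ExtVal M f y fy ∧ ∀ a ∈ M, fy ≤ f a := by
  have hbb : BddBelow (f '' M) := bdd_below_image M hbd f hf
  have hne : (f '' M).Nonempty := hM.image f
  set s := sInf (f '' M) with hs
  have hseq : ∀ n : ℕ, ∃ q, q ∈ M ∧ f q < s + 1 / ((n : ℝ) + 1) := by
    intro n
    have hpos : (0 : ℝ) < 1 / ((n : ℝ) + 1) := by positivity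
    obtain ⟨z, hz, hz'⟩ := Real.lt_sInf_add_pos hne hpos
    obtain ⟨q, hq, rfl⟩ := hz
    exact ⟨q, hq, hz'⟩
  choose a ha hfa using hseq
  obtain ⟨x, φ, hφ, hx⟩ := bw_lemma M hbd a ha
  obtain ⟨L, hext, htend⟩ := key_lemma M f hf (fun k => a (φ k)) (fun k => ha (φ k)) x hx
  have hclose : CloseTo M x := by
    intro ε hε
    rw [Metric.tendsto_atTop] at hx
    obtain ⟨N, hN⟩ := hx ε hε
    refine ⟨a (φ N), ha (φ N), ?_⟩
    have := hN N le_rfl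
    rw [Real.dist_eq] at this
    rw [abs_sub_comm]
    exact this.le
  have hlow : ∀ k, s ≤ f (a (φ k)) := fun k => csInf_le hbb ⟨a (φ k), ha (φ k), rfl⟩
  have hupp : ∀ k, f (a (φ k)) ≤ s + 1 / ((k : ℝ) + 1) := by
    intro k
    have h1 := hfa (φ k)
    have h2 : (k : ℝ) ≤ (φ k : ℝ) := by exact_mod_cast hφ.le_apply
    have h3 : 1 / ((φ k : ℝ) + 1) ≤ 1 / ((k : ℝ) + 1) := by
      apply one_div_le_one_div_of_le (by positivity)
      linarith
    linarith
  have hupptend : Tendsto (fun k : ℕ => s + 1 / ((k : ℝ) + 1)) atTop (𝓝 s) := by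
    have : Tendsto (fun n : ℕ => 1 / ((n : ℝ) + 1)) atTop (𝓝 0) :=
      tendsto_one_div_add_atTop_nhds_zero_nat
    have h := (tendsto_const_nhds (x := s) (f := atTop (α := ℕ))).add this
    simpa using h
  have hsq : Tendsto (fun k => f (a (φ k))) atTop (𝓝 s) :=
    tendsto_of_tendsto_of_tendsto_of_le_of_le tendsto_const_nhds hupptend hlow hupp
  have hLs : L = s := tendsto_nhds_unique htend hsq
  rw [hLs] at hext htend
  exact ⟨x, s, hclose, hext, fun q hq => csInf_le hbb ⟨q, hq, rfl⟩⟩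

theorem attaining_extremes (M : Set ℚ) (hM : M.Nonempty)
    (hbd : ∃ C : ℝ, ∀ a ∈ M, |(a : ℝ)| ≤ C)
    (f : ℚ → ℝ) (hf : UC M f) :
    ∃ y y' : ℝ, CloseTo M y ∧ CloseTo M y' ∧
      ∃ fy fy' : ℝ, ExtVal M f y fy ∧ ExtVal M f y' fy' ∧
        ∀ a ∈ M, fy ≤ f a ∧ f a ≤ fy' := by
  obtain ⟨y, fy, hcy, hexty, hley⟩ := min_lemma M hM hbd f hf
  have hg : UC M (fun q => -(f q)) := by
    intro ε hε
    obtain ⟨δ, hδ, hδ'⟩ := hf ε hε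
    refine ⟨δ, hδ, fun p hp q hq hab => ?_⟩
    have := hδ' p hp q hq hab
    calc |(-(f p)) - (-(f q))| = |f p - f q| := by
          rw [show (-(f p)) - (-(f q)) = f q - f p from by ring, abs_sub_comm]
    _ ≤ ε := this
  obtain ⟨y', L, hcy', hext', hle'⟩ := min_lemma M hM hbd (fun q => -(f q)) hg
  refine ⟨y, y', hcy, hcy', fy, -L, hexty, ?_, fun q hq => ⟨hley q hq, ?_⟩⟩
  · intro b hb hbx
    have := (hext' b hb hbx).neg
    simpa using this
  · have := hle' q hq
    linarith
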